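/- Let N ≥ 2 be an integer, let σ > 0, μ > 0, and τ ≥ 0 be real numbers, and set K = N−1. Let A₁ = −(N·σ/(N−1))·(I − (1/N)·J_K) and A₂ = A₁ − μ·I (both are invertible K×K matrices), and let β₁ = (1/(N−1))·𝟙ᵀ. Then the expected accumulated age of incorrect information per cycle for the single-threshold policy on a symmetric N-state source satisfies τ·β₁·exp(τ•A₁)·(A₁⁻¹ − A₂⁻¹)·𝟙 − β₁·exp(τ•A₁)·(A₁⁻² − A₂⁻²)·𝟙 + β₁·A₁⁻²·𝟙 = τ·e^{−σ·τ/(N−1)}·(N−1)·(1/(σ+μ·(N−1)) − 1/σ) + e^{−σ·τ/(N−1)}·(N−1)²·(1/(σ+μ·(N−1))² − 1/σ²) + (N−1)²/σ². -/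

import Mathlib

open Matrix

/-- The all-ones column vector. -/
noncomputable def onesCol (K : ℕ) : Matrix (Fin K) (Fin 1) ℝ := Matrix.of fun _ _ => 1

/-- The all-ones row vector. -/
noncomputable def onesRow (K : ℕ) : Matrix (Fin 1) (Fin K) ℝ := Matrix.of fun _ _ => 1

/-- The all-ones square matrix. -/
noncomputable def onesMat (K : ℕ) : Matrix (Fin K) (Fin K) ℝ := Matrix.of fun _ _ => 1

open NormedSpace in
lemma exp_mul_eig {n : ℕ} (M : Matrix (Fin n) (Fin n) ℝ) (v : Matrix (Fin n) (Fin 1) ℝ)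
    (r : ℝ) (h : M * v = r • v) :
    NormedSpace.exp M * v = Real.exp r • v := by
  letI : SeminormedRing (Matrix (Fin n) (Fin n) ℝ) := Matrix.linftyOpSemiNormedRing
  letI : NormedRing (Matrix (Fin n) (Fin n) ℝ) := Matrix.linftyOpNormedRing
  letI : NormedAlgebra ℝ (Matrix (Fin n) (Fin n) ℝ) := Matrix.linftyOpNormedAlgebra
  letI : NormedAddCommGroup (Matrix (Fin n) (Fin 1) ℝ) := Matrix.linftyOpNormedAddCommGroup
  letI : NormedSpace ℝ (Matrix (Fin n) (Fin 1) ℝ) := Matrix.linftyOpNormedSpace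
  have hpow : ∀ k : ℕ, M ^ k * v = r ^ k • v := by
    intro k
    induction k with
    | zero => simp
    | succ k ih =>
      rw [pow_succ, Matrix.mul_assoc, h, Matrix.mul_smul, ih, smul_smul, ← pow_succ']
  let L : Matrix (Fin n) (Fin n) ℝ →ₗ[ℝ] Matrix (Fin n) (Fin 1) ℝ :=
    { toFun := fun X => X * v
      map_add' := fun X Y => Matrix.add_mul X Y v
      map_smul' := fun c X => Matrix.smul_mul c X v }
  have hL : Continuous L := L.continuous_of_finiteDimensional
  have hs : HasSum (fun k : ℕ => ((k.factorial : ℝ)⁻¹) • M ^ k) (exp M) := by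
    rw [exp_eq_tsum ℝ]
    exact (expSeries_summable' (𝕂 := ℝ) M).hasSum
  have hs2 : HasSum (fun k : ℕ => L (((k.factorial : ℝ)⁻¹) • M ^ k)) (L (exp M)) :=
    (L.toContinuousLinearMap : _ →L[ℝ] _).hasSum hs
  have hs3 : HasSum (fun k : ℕ => (((k.factorial : ℝ)⁻¹) * r ^ k) • v) (exp M * v) := by
    convert hs2 using 2 with k
    show _ = ((k.factorial : ℝ)⁻¹) • M ^ k * v
    rw [Matrix.smul_mul, hpow, smul_smul]
    rfl
  have hr : HasSum (fun k : ℕ => (((k.factorial : ℝ)⁻¹) * r ^ k) • v) (Real.exp r • v) := by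
    have : HasSum (fun k : ℕ => ((k.factorial : ℝ)⁻¹) • r ^ k) (Real.exp r) := by
      rw [Real.exp_eq_exp_ℝ, exp_eq_tsum ℝ]
      exact (expSeries_summable' (𝕂 := ℝ) r).hasSum
    simpa [smul_eq_mul] using this.smul_const v
  exact hs3.unique hr

lemma onesMat_mul_self (K : ℕ) : onesMat K * onesMat K = (K : ℝ) • onesMat K := by
  ext i j
  simp [onesMat, Matrix.mul_apply]

lemma onesMat_mul_onesCol (K : ℕ) : onesMat K * onesCol K = (K : ℝ) • onesCol K := by
  ext i j
  simp [onesMat, onesCol, Matrix.mul_apply]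

lemma combo_mul {n : ℕ} (J : Matrix (Fin n) (Fin n) ℝ) (k α β γ δ : ℝ)
    (hJ : J * J = k • J) :
    (α • 1 + β • J) * (γ • (1 : Matrix (Fin n) (Fin n) ℝ) + δ • J)
      = (α * γ) • 1 + (α * δ + β * γ + β * δ * k) • J := by
  simp only [Matrix.add_mul, Matrix.mul_add, Matrix.smul_mul, Matrix.mul_smul, hJ,
    smul_smul, Matrix.mul_one, Matrix.one_mul]
  module

lemma combo_mul_ones {n : ℕ} (J : Matrix (Fin n) (Fin n) ℝ) (v : Matrix (Fin n) (Fin 1) ℝ)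
    (k α β : ℝ) (hJv : J * v = k • v) :
    (α • 1 + β • J) * v = (α + β * k) • v := by
  rw [Matrix.add_mul, Matrix.smul_mul, Matrix.smul_mul, Matrix.one_mul, hJv, smul_smul,
    add_smul]

set_option maxHeartbeats 2000000 in
/-- Expected accumulated age of incorrect information per cycle for the ST policy on a
symmetric `N`-state source. -/
theorem st_symmetric_aoii (N : ℕ) (hN : 2 ≤ N)
    (σ μ τ : ℝ) (hσ : 0 < σ) (hμ : 0 < μ) (hτ : 0 ≤ τ)
    (A₁ A₂ : Matrix (Fin (N - 1)) (Fin (N - 1)) ℝ)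
    (hA₁ : A₁ = (-((N : ℝ) * σ / ((N : ℝ) - 1))) •
        ((1 : Matrix (Fin (N - 1)) (Fin (N - 1)) ℝ) - ((1 : ℝ) / (N : ℝ)) • onesMat (N - 1)))
    (hA₂ : A₂ = A₁ - μ • (1 : Matrix (Fin (N - 1)) (Fin (N - 1)) ℝ))
    (β₁ : Matrix (Fin 1) (Fin (N - 1)) ℝ)
    (hβ₁ : β₁ = (1 / ((N : ℝ) - 1)) • onesRow (N - 1)) :
    IsUnit A₁ ∧ IsUnit A₂ ∧
    τ * (β₁ * NormedSpace.exp (τ • A₁) * (A₁⁻¹ - A₂⁻¹) * onesCol (N - 1)) 0 0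
        - (β₁ * NormedSpace.exp (τ • A₁) * (A₁⁻¹ * A₁⁻¹ - A₂⁻¹ * A₂⁻¹) * onesCol (N - 1)) 0 0
        + (β₁ * (A₁⁻¹ * A₁⁻¹) * onesCol (N - 1)) 0 0
      = τ * Real.exp (-(σ * τ) / ((N : ℝ) - 1)) * ((N : ℝ) - 1)
            * (1 / (σ + μ * ((N : ℝ) - 1)) - 1 / σ)
        + Real.exp (-(σ * τ) / ((N : ℝ) - 1)) * ((N : ℝ) - 1) ^ 2
            * (1 / (σ + μ * ((N : ℝ) - 1)) ^ 2 - 1 / σ ^ 2)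
        + ((N : ℝ) - 1) ^ 2 / σ ^ 2 := by
  have hN2 : (2 : ℝ) ≤ (N : ℝ) := by exact_mod_cast hN
  have hNpos : (0 : ℝ) < (N : ℝ) := by linarith
  have hN0 : (N : ℝ) ≠ 0 := ne_of_gt hNpos
  set Kr : ℝ := (N : ℝ) - 1 with hKrdef
  have hKrpos : 0 < Kr := by simp only [hKrdef]; linarith
  have hKr0 : Kr ≠ 0 := ne_of_gt hKrpos
  have hK : ((N - 1 : ℕ) : ℝ) = Kr := by
    have : (1:ℕ) ≤ N := by omega
    push_cast [Nat.cast_sub this]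
    ring
  set c : ℝ := -((N : ℝ) * σ / Kr) with hcdef
  have hcneg : c < 0 := by
    have : 0 < (N : ℝ) * σ / Kr := by positivity
    simp only [hcdef]; linarith
  have hc0 : c ≠ 0 := ne_of_lt hcneg
  have hcμ : c - μ ≠ 0 := by nlinarith
  have hcNμ : c - (N : ℝ) * μ ≠ 0 := by nlinarith
  set J := onesMat (N - 1) with hJdef
  set u := onesCol (N - 1) with hudef
  have hJJ : J * J = Kr • J := by rw [hJdef, onesMat_mul_self, hK]
  have hJu : J * u = Kr • u := by rw [hJdef, hudef, onesMat_mul_onesCol, hK]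
  -- combo forms
  have hA₁' : A₁ = c • 1 + (-(c / (N : ℝ))) • J := by
    rw [hA₁, smul_sub, smul_smul]
    rw [sub_eq_add_neg, ← neg_smul]
    ring_nf
  have hA₂' : A₂ = (c - μ) • 1 + (-(c / (N : ℝ))) • J := by
    rw [hA₂, hA₁', sub_smul]
    abel
  -- explicit inverses
  set q₂ : ℝ := c / ((c - μ) * (c - (N : ℝ) * μ)) with hq₂def
  set B₁ : Matrix (Fin (N - 1)) (Fin (N - 1)) ℝ := (1 / c) • 1 + (1 / c) • J with hB₁def
  set B₂ : Matrix (Fin (N - 1)) (Fin (N - 1)) ℝ := (1 / (c - μ)) • 1 + q₂ • J with hB₂def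
  have key1 : c * (1 / c) = 1 := by field_simp
  have cross1 : c * (1 / c) + -(c / ↑N) * (1 / c) + -(c / ↑N) * (1 / c) * Kr = 0 := by
    field_simp [hKrdef]
    ring
  have hA₁B₁ : A₁ * B₁ = 1 := by
    rw [hA₁', hB₁def, combo_mul J Kr _ _ _ _ hJJ, cross1, key1]
    simp
  have hB₁A₁ : B₁ * A₁ = 1 := by
    rw [hB₁def, hA₁', combo_mul J Kr _ _ _ _ hJJ,
      show 1 / c * -(c / ↑N) + 1 / c * c + 1 / c * -(c / ↑N) * Kr = 0 from by
        field_simp [hKrdef]; try ring,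
      show 1 / c * c = 1 from by field_simp]
    simp
  have hA₂B₂ : A₂ * B₂ = 1 := by
    rw [hA₂', hB₂def, combo_mul J Kr _ _ _ _ hJJ,
      show (c - μ) * q₂ + -(c / ↑N) * (1 / (c - μ)) + -(c / ↑N) * q₂ * Kr = 0 from by
        rw [hq₂def, hKrdef]; field_simp [show c - μ * ↑N ≠ 0 by rw [mul_comm]; exact hcNμ]; try ring,
      show (c - μ) * (1 / (c - μ)) = 1 from by field_simp]
    simp
  have hB₂A₂ : B₂ * A₂ = 1 := by
    rw [hB₂def, hA₂', combo_mul J Kr _ _ _ _ hJJ,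
      show 1 / (c - μ) * -(c / ↑N) + q₂ * (c - μ) + q₂ * -(c / ↑N) * Kr = 0 from by
        rw [hq₂def, hKrdef]; field_simp [show c - μ * ↑N ≠ 0 by rw [mul_comm]; exact hcNμ]; try ring,
      show 1 / (c - μ) * (c - μ) = 1 from by field_simp]
    simp
  have hU₁ : IsUnit A₁ := ⟨⟨A₁, B₁, hA₁B₁, hB₁A₁⟩, rfl⟩
  have hU₂ : IsUnit A₂ := ⟨⟨A₂, B₂, hA₂B₂, hB₂A₂⟩, rfl⟩
  have hInv₁ : A₁⁻¹ = B₁ := Matrix.inv_eq_right_inv hA₁B₁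
  have hInv₂ : A₂⁻¹ = B₂ := Matrix.inv_eq_right_inv hA₂B₂
  refine ⟨hU₁, hU₂, ?_⟩
  set p₁ : ℝ := 1 / c + 1 / c * Kr with hp₁def
  set p₂ : ℝ := 1 / (c - μ) + q₂ * Kr with hp₂def
  have hB₁u : A₁⁻¹ * u = p₁ • u := by
    rw [hInv₁, hB₁def, combo_mul_ones J u Kr _ _ hJu]
  have hB₂u : A₂⁻¹ * u = p₂ • u := by
    rw [hInv₂, hB₂def, combo_mul_ones J u Kr _ _ hJu]
  set r : ℝ := τ * (c + -(c / ↑N) * Kr) with hrdef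
  have hexpu : NormedSpace.exp (τ • A₁) * u = Real.exp r • u := by
    apply exp_mul_eig
    rw [Matrix.smul_mul, hA₁', combo_mul_ones J u Kr _ _ hJu, smul_smul]
  have hβu : β₁ * u = 1 := by
    ext i j
    rw [Matrix.mul_apply]
    simp only [hβ₁, hudef, onesRow, onesCol, Matrix.smul_apply, Matrix.of_apply,
      smul_eq_mul, mul_one, Finset.sum_const, Finset.card_univ, Fintype.card_fin,
      nsmul_eq_mul]
    rw [hK]
    rw [Subsingleton.elim i j, Matrix.one_apply_eq]
    field_simp
  have hDu : (A₁⁻¹ - A₂⁻¹) * u = (p₁ - p₂) • u := by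
    rw [Matrix.sub_mul, hB₁u, hB₂u, sub_smul]
  have hSq1 : A₁⁻¹ * A₁⁻¹ * u = (p₁ * p₁) • u := by
    rw [Matrix.mul_assoc, hB₁u, Matrix.mul_smul, hB₁u, smul_smul]
  have hSq2 : A₂⁻¹ * A₂⁻¹ * u = (p₂ * p₂) • u := by
    rw [Matrix.mul_assoc, hB₂u, Matrix.mul_smul, hB₂u, smul_smul]
  have hSqu : (A₁⁻¹ * A₁⁻¹ - A₂⁻¹ * A₂⁻¹) * u = (p₁ * p₁ - p₂ * p₂) • u := by
    rw [Matrix.sub_mul, hSq1, hSq2, sub_smul]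
  have e1 : (β₁ * NormedSpace.exp (τ • A₁) * (A₁⁻¹ - A₂⁻¹) * u) 0 0
      = (p₁ - p₂) * Real.exp r := by
    rw [Matrix.mul_assoc (β₁ * NormedSpace.exp (τ • A₁)), hDu, Matrix.mul_smul,
      Matrix.mul_assoc, hexpu, Matrix.mul_smul, hβu]
    simp [mul_comm]
  have e2 : (β₁ * NormedSpace.exp (τ • A₁) * (A₁⁻¹ * A₁⁻¹ - A₂⁻¹ * A₂⁻¹) * u) 0 0
      = (p₁ * p₁ - p₂ * p₂) * Real.exp r := by
    rw [Matrix.mul_assoc (β₁ * NormedSpace.exp (τ • A₁)), hSqu, Matrix.mul_smul,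
      Matrix.mul_assoc, hexpu, Matrix.mul_smul, hβu]
    simp [mul_comm]
  have e3 : (β₁ * (A₁⁻¹ * A₁⁻¹) * u) 0 0 = p₁ * p₁ := by
    rw [Matrix.mul_assoc, hSq1, Matrix.mul_smul, hβu]
    simp
  rw [e1, e2, e3]
  clear_value B₁ B₂ J u p₁ p₂ r q₂ c Kr
  have hNKr : (N : ℝ) = Kr + 1 := by rw [hKrdef]; ring
  have hKr1 : Kr + 1 ≠ 0 := by positivity
  have hσ' : σ ≠ 0 := ne_of_gt hσ
  have hσμ : σ + μ * Kr ≠ 0 := by positivity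
  have hσc : σ = -(c * Kr) / (Kr + 1) := by rw [hcdef, hNKr]; field_simp
  have hcμ' : c - (Kr + 1) * μ ≠ 0 := by rw [← hNKr]; exact hcNμ
  have hrval : r = -(σ * τ) / Kr := by
    rw [hrdef, hσc, hNKr]
    field_simp
    ring
  have hp₂' : p₂ = (Kr + 1) / (c - (Kr + 1) * μ) := by
    rw [hp₂def, hq₂def, hNKr]
    rw [div_mul_eq_mul_div, div_add_div _ _ hcμ (mul_ne_zero hcμ hcμ'),
      div_eq_div_iff (mul_ne_zero hcμ (mul_ne_zero hcμ hcμ')) hcμ']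
    ring
  have hp₁ : p₁ = -Kr / σ := by
    rw [eq_div_iff hσ', hp₁def, hσc]
    field_simp
    ring
  have hp₂ : p₂ = -Kr / (σ + μ * Kr) := by
    rw [eq_div_iff hσμ, hp₂', hσc]
    field_simp
    ring
  rw [hrval, hp₁, hp₂]
  field_simp
  ring
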